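/- Let θ_1 > θ_2 > … > θ_I > 0, N_1, …, N_I > 0, and S > 0. Then there exists a unique λ > 0 such that ∑_{i=1}^I N_i·(√(θ_i/λ) − 1)^+ = S; moreover this λ satisfies λ < θ_1. -/

import Mathlib

theorem cp_water_level_exists_unique (I : ℕ) (hI : 1 ≤ I) (θ N : ℕ → ℝ)
    (hθpos : ∀ i < I, 0 < θ i)
    (hθanti : ∀ i j, i < j → j < I → θ j < θ i)
    (hN : ∀ i < I, 0 < N i)
    (S : ℝ) (hS : 0 < S) :
    ∃ lam : ℝ, 0 < lam ∧
      (∑ i ∈ Finset.range I, N i * max (Real.sqrt (θ i / lam) - 1) 0 = S) ∧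
      lam < θ 0 ∧
      ∀ lam' : ℝ, 0 < lam' →
        (∑ i ∈ Finset.range I, N i * max (Real.sqrt (θ i / lam') - 1) 0 = S) →
        lam' = lam := by
  obtain ⟨f, hf⟩ : ∃ f : ℝ → ℝ,
      f = fun lam => ∑ i ∈ Finset.range I, N i * max (Real.sqrt (θ i / lam) - 1) 0 := ⟨_, rfl⟩
  have hθ0 : 0 < θ 0 := hθpos 0 hI
  have hθle : ∀ i < I, θ i ≤ θ 0 := by
    intro i hi
    rcases Nat.eq_zero_or_pos i with h | h
    · simp [h]
    · exact (hθanti 0 i h hi).le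
  -- f vanishes at and above θ 0
  have hzero : ∀ lam, θ 0 ≤ lam → f lam = 0 := by
    intro lam hlam
    rw [hf]
    apply Finset.sum_eq_zero
    intro i hi
    have hi' := Finset.mem_range.mp hi
    have hlampos : 0 < lam := lt_of_lt_of_le hθ0 hlam
    have h1 : θ i / lam ≤ 1 := by
      rw [div_le_one hlampos]
      exact le_trans (hθle i hi') hlam
    have h2 : Real.sqrt (θ i / lam) ≤ 1 := Real.sqrt_le_one.mpr h1
    have : max (Real.sqrt (θ i / lam) - 1) 0 = 0 := max_eq_right (by linarith)
    rw [this, mul_zero]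
  -- f is strictly antitone on Ioc 0 (θ 0)
  have hanti : StrictAntiOn f (Set.Ioc 0 (θ 0)) := by
    intro x hx y hy hxy
    rw [hf]
    apply Finset.sum_lt_sum
    · intro i hi
      have hi' := Finset.mem_range.mp hi
      have hxle : θ i / y ≤ θ i / x :=
        div_le_div_of_nonneg_left (hθpos i hi').le hx.1 hxy.le
      have := Real.sqrt_le_sqrt hxle
      exact mul_le_mul_of_nonneg_left (max_le_max (by linarith) le_rfl) (hN i hi').le
    · refine ⟨0, Finset.mem_range.mpr hI, ?_⟩
      have h1 : (1:ℝ) ≤ θ 0 / y := (one_le_div (hx.1.trans hxy)).mpr hy.2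
      have h2 : θ 0 / y < θ 0 / x := div_lt_div_of_pos_left hθ0 hx.1 hxy
      have hs1 : 1 ≤ Real.sqrt (θ 0 / y) := by
        simpa using Real.sqrt_le_sqrt h1
      have hs2 : Real.sqrt (θ 0 / y) < Real.sqrt (θ 0 / x) :=
        Real.sqrt_lt_sqrt (by positivity) h2
      have e1 : max (Real.sqrt (θ 0 / y) - 1) 0 = Real.sqrt (θ 0 / y) - 1 :=
        max_eq_left (by linarith)
      have e2 : max (Real.sqrt (θ 0 / x) - 1) 0 = Real.sqrt (θ 0 / x) - 1 :=
        max_eq_left (by linarith)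
      rw [e1, e2]
      exact mul_lt_mul_of_pos_left (by linarith) (hN 0 hI)
  -- continuity on positive reals
  have hcont : ContinuousOn f (Set.Ioi 0) := by
    rw [hf]
    apply continuousOn_finset_sum
    intro i _
    apply ContinuousOn.mul continuousOn_const
    apply ContinuousOn.sup _ continuousOn_const
    apply ContinuousOn.sub _ continuousOn_const
    apply ContinuousOn.sqrt
    exact continuousOn_const.div continuousOn_id fun x hx => ne_of_gt hx
  -- the left endpoint
  obtain ⟨c, hc⟩ : ∃ c : ℝ, c = S / N 0 + 1 := ⟨_, rfl⟩
  have hN0 := hN 0 hI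
  have hcpos : 1 < c := by
    have : 0 < S / N 0 := div_pos hS hN0
    rw [hc]; linarith
  obtain ⟨a, ha⟩ : ∃ a : ℝ, a = θ 0 / c ^ 2 := ⟨_, rfl⟩
  have hapos : 0 < a := by rw [ha]; positivity
  have haθ : a < θ 0 := by
    rw [ha, div_lt_iff₀ (by positivity)]
    nlinarith [sq_nonneg (c - 1), mul_pos hθ0 (show (0:ℝ) < c - 1 by linarith)]
  have hfa : S ≤ f a := by
    have hterm : N 0 * max (Real.sqrt (θ 0 / a) - 1) 0 = S := by
      have h3 : θ 0 / a = c ^ 2 := by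
        rw [ha]
        field_simp
      rw [h3, Real.sqrt_sq (by linarith)]
      have : max (c - 1) 0 = c - 1 := max_eq_left (by linarith)
      rw [this, hc]
      field_simp
      ring
    rw [hf]
    calc S = N 0 * max (Real.sqrt (θ 0 / a) - 1) 0 := hterm.symm
      _ ≤ _ := by
          apply Finset.single_le_sum (f := fun i => N i * max (Real.sqrt (θ i / a) - 1) 0)
            (fun i hi => ?_) (Finset.mem_range.mpr hI)
          exact mul_nonneg (hN i (Finset.mem_range.mp hi)).le (le_max_right _ _)
  -- IVT
  have hsub : Set.Icc a (θ 0) ⊆ Set.Ioi 0 := fun x hx => lt_of_lt_of_le hapos hx.1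
  have hivt := intermediate_value_Icc' haθ.le (hcont.mono hsub)
  have hmem : S ∈ Set.Icc (f (θ 0)) (f a) := by
    rw [hzero (θ 0) le_rfl]
    exact ⟨hS.le, hfa⟩
  obtain ⟨lam, hlamIcc, hlamf⟩ := hivt hmem
  have hlampos : 0 < lam := lt_of_lt_of_le hapos hlamIcc.1
  have hlamlt : lam < θ 0 := by
    rcases lt_or_eq_of_le hlamIcc.2 with h | h
    · exact h
    · exfalso
      rw [h, hzero (θ 0) le_rfl] at hlamf
      linarith
  have hlamf' : ∑ i ∈ Finset.range I, N i * max (Real.sqrt (θ i / lam) - 1) 0 = S := by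
    rw [← hlamf, hf]
  refine ⟨lam, hlampos, hlamf', hlamlt, ?_⟩
  intro lam' hlam' hflam'
  have hflam'' : f lam' = S := by rw [hf]; exact hflam'
  have hlam'lt : lam' < θ 0 := by
    by_contra h
    push_neg at h
    rw [hzero lam' h] at hflam''
    linarith
  exact hanti.injOn ⟨hlam', hlam'lt.le⟩ ⟨hlampos, hlamlt.le⟩ (by rw [hflam'', hlamf])
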